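/- Let A be a finite-dimensional unital associative algebra over an algebraically closed field of characteristic p with p ≠ 2 and p ≠ 3, with Jacobson radical R, let L = A^(k) for some k ≥ 0, set N = R ∩ L, and let B be a Jordan-Lie inner ideal of L. Then (i) the images of B and of core_L(B) in L/N coincide, and (ii) if core_L(B) = 0 then B ⊆ N. -/

import Mathlib

namespace Paper

variable (F A : Type*) [Field F] [Ring A] [Algebra F A]

/-- The derived series `A⁽ᵏ⁾` of the Lie algebra `A⁽⁻⁾` (as subspaces of `A`). -/
def derivedSeries : ℕ → Submodule F A
  | 0 => ⊤
  | (k+1) => Submodule.span F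
      {z : A | ∃ x ∈ derivedSeries k, ∃ y ∈ derivedSeries k, z = ⁅x, y⁆}

variable {F A}

/-- `B` is an inner ideal of the Lie algebra given by the subspace `L` of `A⁽⁻⁾`. -/
def IsInnerIdeal (L B : Submodule F A) : Prop :=
  B ≤ L ∧ ∀ b ∈ B, ∀ b' ∈ B, ∀ x ∈ L, ⁅b, ⁅b', x⁆⁆ ∈ B

/-- `B` is a Jordan-Lie inner ideal of `L`. -/
def IsJordanLie (L B : Submodule F A) : Prop :=
  IsInnerIdeal L B ∧ ∀ b ∈ B, ∀ b' ∈ B, b * b' = 0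

/-- Jacobson radical of `A` as an `F`-subspace. -/
noncomputable def radical : Submodule F A :=
  (Ideal.jacobson (⊥ : Ideal A)).restrictScalars F

/-- The Jacobson radical of a subalgebra `A'`, as a subset of `A`. -/
def subalgRad (A' : Subalgebra F A) : Set A :=
  Subtype.val '' ((Ideal.jacobson (⊥ : Ideal A')) : Set A')

/-- `c` represents a central idempotent of the quotient of the
(sub)algebra with carrier `S` by the ideal with carrier `ρ`. -/
def IsCentralIdempotentMod (S ρ : Set A) (c : A) : Prop :=
  c ∈ S ∧ (∀ a ∈ S, c * a - a * c ∈ ρ) ∧ c * c - c ∈ ρ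

/-- `c` represents a primitive central idempotent of the quotient mod `ρ`. -/
def IsPrimitiveCentralIdempotentMod (S ρ : Set A) (c : A) : Prop :=
  IsCentralIdempotentMod S ρ c ∧ c ∉ ρ ∧
    ¬ ∃ c₁ c₂ : A, IsCentralIdempotentMod S ρ c₁ ∧ IsCentralIdempotentMod S ρ c₂ ∧
      c₁ ∉ ρ ∧ c₂ ∉ ρ ∧ c₁ * c₂ ∈ ρ ∧ c₂ * c₁ ∈ ρ ∧ c - (c₁ + c₂) ∈ ρ

/-- The idempotent pair `(e, f)` is strict w.r.t. the quotient mod `ρ`: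
for every primitive central idempotent `c` of the quotient, `c·ē = 0 ↔ c·f̄ = 0`. -/
def IsStrictPairMod (S ρ : Set A) (e f : A) : Prop :=
  ∀ c : A, IsPrimitiveCentralIdempotentMod S ρ c → (c * e ∈ ρ ↔ c * f ∈ ρ)

/-- `(e,f)` is a strict idempotent pair of `A` (strictness w.r.t. `A/rad A`). -/
def IsStrictPair (e f : A) : Prop :=
  e * e = e ∧ f * f = f ∧
    IsStrictPairMod Set.univ ((Ideal.jacobson (⊥ : Ideal A)) : Set A) e f

/-- `J` is a two-sided ideal of the (possibly non-unital) algebra `P`. -/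
def IsTwoSidedIdealIn (P J : Submodule F A) : Prop :=
  J ≤ P ∧ ∀ p ∈ P, ∀ x ∈ J, p * x ∈ J ∧ x * p ∈ J

/-- The algebra with carrier `P` is 1-perfect: it has no two-sided ideals of
codimension 1. -/
def IsOnePerfect (P : Submodule F A) : Prop :=
  ¬ ∃ J : Submodule F A, IsTwoSidedIdealIn P J ∧
      Module.finrank F P = Module.finrank F J + 1


variable (F) in
/-- The descending chain `B₀ = B`, `Bₙ = [Bₙ₋₁,[Bₙ₋₁,L]]` of inner ideals; its
stable value is the core `core_L(B)`. -/
def coreSeq (L B : Submodule F A) : ℕ → Submodule F A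
  | 0 => B
  | (n+1) => Submodule.span F
      {z : A | ∃ b ∈ coreSeq L B n, ∃ b' ∈ coreSeq L B n, ∃ x ∈ L, z = ⁅b, ⁅b', x⁆⁆}


section Aux

variable {A : Type*} [Ring A]

lemma jac_mul_mem {x : A} (hx : x ∈ Ideal.jacobson (⊥ : Ideal A)) (y : A) :
    x * y ∈ Ideal.jacobson (⊥ : Ideal A) :=
  Ideal.mul_mem_right y _ hx

/-- Every element of a finite-dimensional algebra is von Neumann regular
modulo the Jacobson radical. -/
lemma exists_regular_mod (F : Type*) [Field F] [Algebra F A] [FiniteDimensional F A] (b : A) :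
    ∃ a : A, b - b * a * b ∈ Ideal.jacobson (⊥ : Ideal A) := by
  classical
  haveI : IsArtinian A A := isArtinian_of_tower F inferInstance
  set J : Ideal A := Ideal.jacobson (⊥ : Ideal A) with hJ
  -- J is a finite intersection of maximal left ideals
  obtain ⟨I₀, hI₀mem, hmin⟩ := IsArtinian.set_has_minimal
    {I : Submodule A A | ∃ s : Finset (Ideal A), (∀ m ∈ s, IsCoatom m) ∧ I = s.inf id}
    ⟨⊤, ∅, by simp, by simp⟩
  obtain ⟨s, hs, rfl⟩ := hI₀mem
  have hle : ∀ m : Ideal A, IsCoatom m → s.inf id ≤ m := by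
    intro m hm
    by_contra hnle
    have hlt : (s.inf id) ⊓ m < s.inf id :=
      lt_of_le_of_ne inf_le_left (fun h => hnle (h ▸ inf_le_right))
    exact hmin _ ⟨insert m s, fun m' hm' => by
        rcases Finset.mem_insert.mp hm' with h | h
        · exact h ▸ hm
        · exact hs m' h, by rw [Finset.inf_insert, inf_comm]; rfl⟩ hlt
  have hJeq : J = s.inf id := by
    apply le_antisymm
    · exact Finset.le_inf fun m hm => sInf_le ⟨bot_le, Ideal.isMaximal_def.mpr (hs m hm)⟩
    · exact le_sInf fun m hm => hle m (Ideal.isMaximal_def.mp hm.2)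
  -- the quotient A/J is a semisimple A-module
  let g : A →ₗ[A] ((m : s) → A ⧸ (m : Ideal A)) :=
    LinearMap.pi fun m => Submodule.mkQ (m : Ideal A)
  have hker : LinearMap.ker g = J := by
    rw [LinearMap.ker_pi]
    simp only [Submodule.ker_mkQ]
    rw [hJeq, Finset.inf_eq_iInf, iInf_subtype]
    rfl
  haveI hsimple : ∀ m : s, IsSimpleModule A (A ⧸ (m : Ideal A)) := fun m =>
    (isSimpleModule_iff_isCoatom).mpr (hs m m.2)
  haveI : IsSemisimpleModule A ((m : s) → A ⧸ (m : Ideal A)) := by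
    refine isSemisimpleModule_of_isSemisimpleModule_submodule'
      (p := fun i => LinearMap.range (LinearMap.single A (fun m : s => A ⧸ (m : Ideal A)) i))
      (fun i => ?_) ?_
    · exact IsSemisimpleModule.congr
        (LinearEquiv.ofInjective _
          (LinearMap.ker_eq_bot.mp (LinearMap.ker_single A _ i))).symm
    · simp_rw [LinearMap.range_eq_map, Submodule.iSup_map_single, Submodule.pi_top]
  haveI hss : IsSemisimpleModule A (A ⧸ J) := by
    have e : (A ⧸ J) ≃ₗ[A] LinearMap.range g :=
      (Submodule.quotEquivOfEq J (LinearMap.ker g) hker.symm).trans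
        (LinearMap.quotKerEquivRange g)
    haveI : IsSemisimpleModule A ↥(LinearMap.range g) := inferInstance
    exact IsSemisimpleModule.congr (N := A ⧸ J) (M := ↥(LinearMap.range g)) e
  -- complement of the image of the left ideal generated by b
  set π : A →ₗ[A] A ⧸ J := Submodule.mkQ J with hπ
  set K : Submodule A (A ⧸ J) := Submodule.map π (Ideal.span {b}) with hK
  obtain ⟨C, hC⟩ := exists_isCompl K
  obtain ⟨kk, hk, c, hc, h1⟩ := Submodule.mem_sup.mp
    ((hC.sup_eq_top ▸ Submodule.mem_top : (π 1 : A ⧸ J) ∈ K ⊔ C))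
  obtain ⟨u, hu, rfl⟩ := hk
  obtain ⟨v, hv⟩ := Submodule.mem_span_singleton.mp hu
  refine ⟨v, ?_⟩
  have hbc : π (b - b * v * b) = b • c := by
    have h2 : b * v * b = b • u := by rw [← hv]; simp [smul_eq_mul, mul_assoc]
    have h3 : (b : A) = b • (1 : A) := by simp [smul_eq_mul]
    calc π (b - b * v * b) = π (b • (1 : A)) - π (b • u) := by rw [map_sub, ← h3, h2]
    _ = b • (π 1) - b • (π u) := by rw [map_smul, map_smul]
    _ = b • c := by rw [← h1, smul_add]; abel
  have hmem : π (b - b * v * b) ∈ K ⊓ C := by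
    constructor
    · refine Submodule.mem_map_of_mem ?_
      have h4 : b - b * v * b = (1 - b * v) • b := by
        simp [smul_eq_mul, sub_mul, one_mul, mul_assoc]
      rw [h4]
      exact Submodule.mem_span_singleton.mpr ⟨_, rfl⟩
    · rw [hbc]; exact C.smul_mem b hc
  have hz : π (b - b * v * b) = 0 := by
    rw [hC.inf_eq_bot] at hmem
    simpa using hmem
  have := (Submodule.Quotient.mk_eq_zero J).mp (by rw [← Submodule.mkQ_apply]; exact hz)
  exact this

end Aux

section MainProof

variable {F A : Type*} [Field F] [Ring A] [Algebra F A]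

lemma derivedSeries_succ_le (k : ℕ) :
    derivedSeries F A (k + 1) ≤ derivedSeries F A k := by
  induction k with
  | zero => exact le_top
  | succ k ih =>
    refine Submodule.span_le.mpr ?_
    rintro z ⟨x, hx, y, hy, rfl⟩
    exact Submodule.subset_span ⟨x, ih hx, y, ih hy, rfl⟩

lemma half_neg {V : Type*} [AddCommGroup V] [Module F V] (h2 : (2 : F) ≠ 0) (m : V) :
    (-(2⁻¹ : F)) • (-m - m) = m := by
  have h : -m - m = (-2 : F) • m := by rw [neg_smul, two_smul]; abel
  rw [h, smul_smul, neg_mul_neg, inv_mul_cancel₀ h2, one_smul]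

/-- Key lemma: an element of `A⁽ᵏ⁾` of square zero is von Neumann regular modulo
the radical, with a regularity witness inside `A⁽ᵏ⁾`. -/
lemma key [FiniteDimensional F A] (h2 : (2 : F) ≠ 0) (k : ℕ) {b : A}
    (hb : b ∈ derivedSeries F A k) (hbb : b * b = 0) :
    ∃ a ∈ derivedSeries F A k, b - b * a * b ∈ Ideal.jacobson (⊥ : Ideal A) := by
  induction k with
  | zero =>
    obtain ⟨a, ha⟩ := exists_regular_mod F b
    exact ⟨a, Submodule.mem_top, ha⟩
  | succ k ih =>
    obtain ⟨a, haL, har⟩ := ih (derivedSeries_succ_le k hb)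
    set r := b - b * a * b with hr
    set X := (⁅⁅b, a⁆, a⁆ : A) with hX
    have hXmem : X ∈ derivedSeries F A (k + 1) := by
      have h1 : (⁅b, a⁆ : A) ∈ derivedSeries F A (k + 1) :=
        Submodule.subset_span ⟨b, derivedSeries_succ_le k hb, a, haL, rfl⟩
      exact Submodule.subset_span ⟨⁅b, a⁆, derivedSeries_succ_le k h1, a, haL, rfl⟩
    refine ⟨(-(2⁻¹ : F)) • X, Submodule.smul_mem _ _ hXmem, ?_⟩
    have e0 : b * X * b + (b * a * (b * a * b) + b * a * (b * a * b)) =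
        (b * b) * (a * (a * b)) + b * (a * (a * (b * b))) := by
      simp only [hX, Ring.lie_def]; noncomm_ring
    rw [hbb, zero_mul, mul_zero, mul_zero, mul_zero, add_zero] at e0
    have e1 : b * X * b = -(b * a * (b * a * b)) - b * a * (b * a * b) := by
      have h9 := eq_neg_of_add_eq_zero_left e0
      rw [h9]; abel
    have h5 : b * a * b = b - r := by rw [hr]; abel
    have e2 : b * a * (b * a * b) = b - r - r * (a * b) := by
      calc b * a * (b * a * b) = (b * a * b) * (a * b) := by noncomm_ring
      _ = (b - r) * (a * b) := by rw [h5]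
      _ = b * a * b - r * (a * b) := by noncomm_ring
      _ = b - r - r * (a * b) := by rw [h5]
    have h6 : b * ((-(2⁻¹ : F)) • X) * b = (-(2⁻¹ : F)) • (b * X * b) := by
      rw [mul_smul_comm, smul_mul_assoc]
    have h7 : b - b * ((-(2⁻¹ : F)) • X) * b = r + r * (a * b) := by
      rw [h6, e1, e2, half_neg h2]
      abel
    rw [h7]
    exact Ideal.add_mem _ har (jac_mul_mem har _)

end MainProof

/-- **Lemma.** Let `p ≠ 2,3`, `L = A⁽ᵏ⁾`, `N = R ∩ L` and let `B` be a Jordan-Lie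
inner ideal of `L`.  Then (i) `B` and `core_L(B)` have the same image in `L/N`, and
(ii) if `core_L(B) = 0` then `B ⊆ N`.  (The core is the stable value of the chain
`coreSeq`.) -/
theorem core_bar_eq (F A : Type*) [Field F] [IsAlgClosed F] (p : ℕ) [CharP F p]
    (hp2 : p ≠ 2) (hp3 : p ≠ 3) [Ring A] [Algebra F A] [FiniteDimensional F A]
    (k : ℕ) (B : Submodule F A)
    (hJLie : IsJordanLie (derivedSeries F A k) B)
    (N : Submodule F A) (hN : N = (radical : Submodule F A) ⊓ derivedSeries F A k)
    (n : ℕ) (hstab : coreSeq F (derivedSeries F A k) B (n + 1) =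
      coreSeq F (derivedSeries F A k) B n) :
    (∀ x ∈ B, ∃ y ∈ coreSeq F (derivedSeries F A k) B n, x - y ∈ N) ∧
    (∀ y ∈ coreSeq F (derivedSeries F A k) B n, ∃ x ∈ B, y - x ∈ N) ∧
    (coreSeq F (derivedSeries F A k) B n = ⊥ → B ≤ N) := by
  classical
  have h2 : (2 : F) ≠ 0 := by
    intro h
    have hdvd := (CharP.cast_eq_zero_iff F p 2).mp h
    rcases CharP.char_is_prime_or_zero F p with hp | hp
    · exact hp2 ((Nat.prime_dvd_prime_iff_eq hp Nat.prime_two).mp hdvd)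
    · rw [hp] at hdvd; simp at hdvd
  subst hN
  set L : Submodule F A := derivedSeries F A k with hL
  -- each term of the chain is contained in B
  have hcle : ∀ m, coreSeq F L B m ≤ B := by
    intro m
    induction m with
    | zero => exact le_refl _
    | succ m ih =>
      refine Submodule.span_le.mpr ?_
      rintro z ⟨b, hb, b', hb', x, hx, rfl⟩
      exact hJLie.1.2 b (ih hb) b' (ih hb') x hx
  -- the one-step descent modulo N
  have hstep : ∀ m, coreSeq F L B m ≤
      coreSeq F L B (m + 1) ⊔ ((radical : Submodule F A) ⊓ L) := by
    intro m b hb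
    have hbB : b ∈ B := hcle m hb
    have hbL : b ∈ L := hJLie.1.1 hbB
    have hbb : b * b = 0 := hJLie.2 b hbB b hbB
    obtain ⟨a, haL, har⟩ := key h2 k hbL hbb
    have hlie : (⁅b, ⁅b, a⁆⁆ : A) ∈ coreSeq F L B (m + 1) :=
      Submodule.subset_span ⟨b, hb, b, hb, a, haL, rfl⟩
    have e0 : (⁅b, ⁅b, a⁆⁆ : A) + (b * a * b + b * a * b) =
        (b * b) * a + a * (b * b) := by
      simp only [Ring.lie_def]; noncomm_ring
    rw [hbb, zero_mul, mul_zero, add_zero] at e0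
    have e1 : (⁅b, ⁅b, a⁆⁆ : A) = -(b * a * b) - b * a * b := by
      have h9 := eq_neg_of_add_eq_zero_left e0
      rw [h9]; abel
    have hbab : b * a * b ∈ coreSeq F L B (m + 1) := by
      have : b * a * b = (-(2⁻¹ : F)) • (⁅b, ⁅b, a⁆⁆ : A) := by
        rw [e1, half_neg h2]
      rw [this]
      exact Submodule.smul_mem _ _ hlie
    have hsub : b - b * a * b ∈ (radical : Submodule F A) ⊓ L := by
      constructor
      · exact har
      · exact Submodule.sub_mem _ hbL (hJLie.1.1 (hcle (m + 1) hbab))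
    have hb' : b = b * a * b + (b - b * a * b) := by abel
    rw [hb']
    exact Submodule.add_mem _ (Submodule.mem_sup_left hbab) (Submodule.mem_sup_right hsub)
  have hchain : ∀ m, B ≤ coreSeq F L B m ⊔ ((radical : Submodule F A) ⊓ L) := by
    intro m
    induction m with
    | zero => exact le_sup_left
    | succ m ih => exact ih.trans (sup_le (hstep m) le_sup_right)
  refine ⟨?_, ?_, ?_⟩
  · intro x hx
    obtain ⟨y, hy, z, hz, hxyz⟩ := Submodule.mem_sup.mp (hchain n hx)
    refine ⟨y, hy, ?_⟩
    have : x - y = z := by rw [← hxyz]; abel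
    rw [this]; exact hz
  · intro y hy
    exact ⟨y, hcle n hy, by rw [sub_self]; exact Submodule.zero_mem _⟩
  · intro hbot
    have h := hchain n
    rw [hbot, bot_sup_eq] at h
    exact h


end Paper
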